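/- Lipschitz continuity of the graph Laplacian in the underlying signal: There exists a constant 𝓗 > 0, depending only on n, g and σ, such that for all x, y : Fin n → ℝ the graph Laplacians satisfy ‖Δ_x − Δ_y‖ ≤ 𝓗·‖x − y‖₂ in the operator norm induced by the Euclidean norm; consequently, for every z : Fin n → ℝ, ‖Δ_x z − Δ_y z‖₂ ≤ 𝓗·‖z‖₂·‖x − y‖₂. -/

import Mathlib

open scoped BigOperators RealInnerProductSpace Classical
open ContinuousLinearMap Filter

noncomputable section

/-- Weight matrix induced by a signal `x` on the image graph. -/
def wMat {n : ℕ} (g : Fin n → Fin n → ℝ) (σ : ℝ) (x : EuclideanSpace ℝ (Fin n)) :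
    Matrix (Fin n) (Fin n) ℝ :=
  Matrix.of fun a b => g a b * Real.exp (-(x a - x b) ^ 2 / σ)

/-- Degree function of the graph induced by `x`. -/
def degFun {n : ℕ} (g : Fin n → Fin n → ℝ) (σ : ℝ) (x : EuclideanSpace ℝ (Fin n))
    (a : Fin n) : ℝ :=
  ∑ b, wMat g σ x a b

/-- Graph Laplacian matrix `Δ_x = D_x − W_x`. -/
def lapMat {n : ℕ} (g : Fin n → Fin n → ℝ) (σ : ℝ) (x : EuclideanSpace ℝ (Fin n)) :
    Matrix (Fin n) (Fin n) ℝ :=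
  Matrix.diagonal (degFun g σ x) - wMat g σ x

/-- Graph Laplacian as a continuous linear map on Euclidean space. -/
def lapCLM {n : ℕ} (g : Fin n → Fin n → ℝ) (σ : ℝ) (x : EuclideanSpace ℝ (Fin n)) :
    EuclideanSpace ℝ (Fin n) →L[ℝ] EuclideanSpace ℝ (Fin n) :=
  LinearMap.toContinuousLinearMap (Matrix.toEuclideanLin (lapMat g σ x))

/-- Adaptive step size `α_w(u)`. -/
def alphaStep {n m : ℕ} (A : EuclideanSpace ℝ (Fin n) →L[ℝ] EuclideanSpace ℝ (Fin m))
    (η₀ η₁ : ℝ) (w : EuclideanSpace ℝ (Fin m)) (u : EuclideanSpace ℝ (Fin n)) : ℝ :=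
  if adjoint A (A u - w) ≠ 0 then
    min (η₀ * ‖A u - w‖ ^ 2 / ‖adjoint A (A u - w)‖ ^ 2) η₁
  else η₁

/-- Adaptive weight `β_w(u)`. -/
def betaStep {n m : ℕ} (g : Fin n → Fin n → ℝ) (σ : ℝ)
    (A : EuclideanSpace ℝ (Fin n) →L[ℝ] EuclideanSpace ℝ (Fin m))
    (ν₀ ν₁ ν₂ : ℝ) (w : EuclideanSpace ℝ (Fin m)) (u : EuclideanSpace ℝ (Fin n)) : ℝ :=
  if lapCLM g σ u u ≠ 0 then
    min (min (ν₀ * ‖A u - w‖ ^ 2 / ‖lapCLM g σ u u‖) (ν₁ / ‖lapCLM g σ u u‖)) ν₂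
  else 0

/-- One step of the IRMGL iteration with data `w`. -/
def irmglStep {n m : ℕ} (g : Fin n → Fin n → ℝ) (σ : ℝ)
    (A : EuclideanSpace ℝ (Fin n) →L[ℝ] EuclideanSpace ℝ (Fin m))
    (η₀ η₁ ν₀ ν₁ ν₂ : ℝ) (w : EuclideanSpace ℝ (Fin m))
    (u : EuclideanSpace ℝ (Fin n)) : EuclideanSpace ℝ (Fin n) :=
  u - alphaStep A η₀ η₁ w u • adjoint A (A u - w)
    - betaStep g σ A ν₀ ν₁ ν₂ w u • lapCLM g σ u u

/-- The IRMGL iterates with data `w` started at `u₀`. -/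
def irmglSeq {n m : ℕ} (g : Fin n → Fin n → ℝ) (σ : ℝ)
    (A : EuclideanSpace ℝ (Fin n) →L[ℝ] EuclideanSpace ℝ (Fin m))
    (η₀ η₁ ν₀ ν₁ ν₂ : ℝ) (w : EuclideanSpace ℝ (Fin m))
    (u₀ : EuclideanSpace ℝ (Fin n)) : ℕ → EuclideanSpace ℝ (Fin n)
  | 0 => u₀
  | k + 1 => irmglStep g σ A η₀ η₁ ν₀ ν₁ ν₂ w
      (irmglSeq g σ A η₀ η₁ ν₀ ν₁ ν₂ w u₀ k)

end


lemma expsq_lip {σ : ℝ} (hσ : 0 < σ) (s t : ℝ) :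
    |Real.exp (-s ^ 2 / σ) - Real.exp (-t ^ 2 / σ)| ≤ (2 / σ + 2) * |s - t| := by
  have hC : (0:ℝ) ≤ 2 / σ + 2 := by positivity
  have hlip : LipschitzWith (NNReal.mk (2 / σ + 2) hC) (fun t : ℝ => Real.exp (-t ^ 2 / σ)) := by
    apply lipschitzWith_of_nnnorm_deriv_le
    · intro t
      exact (((differentiable_pow 2).neg.div_const σ).differentiableAt).exp
    · intro t
      have hd : HasDerivAt (fun t : ℝ => Real.exp (-t ^ 2 / σ))
          (Real.exp (-t ^ 2 / σ) * (-(2 * t) / σ)) t := by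
        have h1 : HasDerivAt (fun t : ℝ => -t ^ 2 / σ) (-(2 * t) / σ) t := by
          have := (hasDerivAt_pow 2 t).neg.div_const σ
          simpa using this
        exact h1.exp
      rw [hd.deriv, ← NNReal.coe_le_coe]
      simp only [coe_nnnorm, Real.norm_eq_abs, NNReal.coe_mk]
      rw [abs_mul, abs_of_pos (Real.exp_pos _)]
      have habs : |(-(2 * t) / σ)| = 2 * |t| / σ := by
        rw [abs_div, abs_neg, abs_mul, abs_of_pos hσ]
        norm_num
      rw [habs]
      rcases le_or_gt |t| 1 with h | h
      · have h1 : Real.exp (-t ^ 2 / σ) ≤ 1 := by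
          rw [Real.exp_le_one_iff, neg_div]
          exact neg_nonpos.mpr (by positivity)
        have h2 : 2 * |t| / σ ≤ 2 / σ := by
          gcongr
          linarith
        calc Real.exp (-t ^ 2 / σ) * (2 * |t| / σ) ≤ 1 * (2 / σ) := by
              apply mul_le_mul h1 h2 (by positivity) one_pos.le
          _ ≤ 2 / σ + 2 := by norm_num
      · have ht0 : (0:ℝ) < |t| := by linarith
        have ht2 : (0:ℝ) < t ^ 2 := by nlinarith [sq_abs t]
        have h2 : t ^ 2 / σ ≤ Real.exp (t ^ 2 / σ) := by
          have := Real.add_one_le_exp (t ^ 2 / σ); linarith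
        have h1 : Real.exp (-t ^ 2 / σ) ≤ σ / t ^ 2 := by
          rw [neg_div, Real.exp_neg]
          calc (Real.exp (t ^ 2 / σ))⁻¹ ≤ (t ^ 2 / σ)⁻¹ :=
                inv_anti₀ (by positivity) h2
            _ = σ / t ^ 2 := by rw [inv_div]
        have e1 : Real.exp (-t ^ 2 / σ) * (2 * |t| / σ) ≤ (σ / t ^ 2) * (2 * |t| / σ) :=
          mul_le_mul_of_nonneg_right h1 (by positivity)
        have e2 : (σ / t ^ 2) * (2 * |t| / σ) = 2 / |t| := by
          have hsq := sq_abs t; rw [← hsq]; field_simp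
        have e3 : 2 / |t| ≤ 2 := by
          rw [div_le_iff₀ ht0]; nlinarith
        have e4 : (0:ℝ) ≤ 2 / σ := by positivity
        linarith [e1, e2 ▸ e1]
  have := hlip.dist_le_mul s t
  simpa [Real.dist_eq, NNReal.coe_mk] using this

lemma coord_le_norm {n : ℕ} (v : EuclideanSpace ℝ (Fin n)) (a : Fin n) : |v a| ≤ ‖v‖ := by
  rw [EuclideanSpace.norm_eq, ← Real.sqrt_sq_eq_abs]
  apply Real.sqrt_le_sqrt
  have := Finset.single_le_sum (f := fun b => ‖v b‖ ^ 2) (fun b _ => sq_nonneg _)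
    (Finset.mem_univ a)
  simpa [Real.norm_eq_abs, sq_abs] using this

lemma coord_le_norm' {n : ℕ} (x y : EuclideanSpace ℝ (Fin n)) (a : Fin n) :
    |x a - y a| ≤ ‖x - y‖ := by
  have := coord_le_norm (x - y) a
  simpa using this

theorem stmt10 (n : ℕ) (g : Fin n → Fin n → ℝ) (σ : ℝ) (hσ : 0 < σ)
    (hgsymm : ∀ a b, g a b = g b a) (hgnn : ∀ a b, 0 ≤ g a b) (hgdiag : ∀ a, g a a = 0) :
    ∃ H : ℝ, 0 < H ∧
      (∀ x y : EuclideanSpace ℝ (Fin n), ‖lapCLM g σ x - lapCLM g σ y‖ ≤ H * ‖x - y‖) ∧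
      (∀ x y z : EuclideanSpace ℝ (Fin n),
        ‖lapCLM g σ x z - lapCLM g σ y z‖ ≤ H * ‖z‖ * ‖x - y‖) := by
  classical
  set C : ℝ := (∑ a, ∑ b, |g a b|) + 1 with hCdef
  have hC : 0 < C := by
    have : (0:ℝ) ≤ ∑ a, ∑ b, |g a b| :=
      Finset.sum_nonneg fun a _ => Finset.sum_nonneg fun b _ => abs_nonneg _
    simp only [hCdef]; linarith
  have hgC : ∀ a b, |g a b| ≤ C := by
    intro a b
    have h1 : |g a b| ≤ ∑ b', |g a b'| :=
      Finset.single_le_sum (f := fun b' => |g a b'|) (fun b' _ => abs_nonneg _)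
        (Finset.mem_univ b)
    have h2 : (∑ b', |g a b'|) ≤ ∑ a', ∑ b', |g a' b'| :=
      Finset.single_le_sum (f := fun a' => ∑ b', |g a' b'|)
        (fun a' _ => Finset.sum_nonneg fun b' _ => abs_nonneg _) (Finset.mem_univ a)
    simp only [hCdef]; linarith
  set L : ℝ := 2 / σ + 2 with hLdef
  have hL : 0 < L := by simp only [hLdef]; positivity
  set K : ℝ := 2 * C * L * n with hKdef
  have hK : 0 ≤ K := by simp only [hKdef]; positivity
  set H : ℝ := 2 * C * L * (n:ℝ) ^ 3 + 1 with hHdef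
  have hH : 0 < H := by simp only [hHdef]; positivity
  have key : ∀ x y z : EuclideanSpace ℝ (Fin n),
      ‖lapCLM g σ x z - lapCLM g σ y z‖ ≤ H * ‖x - y‖ * ‖z‖ := by
    intro x y z
    -- entrywise bound on the weight matrix difference
    have hw : ∀ a b, |wMat g σ x a b - wMat g σ y a b| ≤ 2 * C * L * ‖x - y‖ := by
      intro a b
      have e1 : wMat g σ x a b - wMat g σ y a b
          = g a b * (Real.exp (-(x a - x b) ^ 2 / σ) - Real.exp (-(y a - y b) ^ 2 / σ)) := by
        simp [wMat]; ring
      rw [e1, abs_mul]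
      have h2 := expsq_lip hσ (x a - x b) (y a - y b)
      have h3 : |x a - x b - (y a - y b)| ≤ 2 * ‖x - y‖ := by
        have ha := coord_le_norm' x y a
        have hb := coord_le_norm' x y b
        have : |x a - x b - (y a - y b)| ≤ |x a - y a| + |x b - y b| := by
          have := abs_sub (x a - y a) (x b - y b)
          calc |x a - x b - (y a - y b)| = |(x a - y a) - (x b - y b)| := by ring_nf
            _ ≤ |x a - y a| + |x b - y b| := abs_sub _ _
        linarith
      have h4 : |Real.exp (-(x a - x b) ^ 2 / σ) - Real.exp (-(y a - y b) ^ 2 / σ)|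
          ≤ L * (2 * ‖x - y‖) := by
        calc _ ≤ L * |x a - x b - (y a - y b)| := h2
          _ ≤ L * (2 * ‖x - y‖) := by
            apply mul_le_mul_of_nonneg_left h3 hL.le
      calc |g a b| * |Real.exp (-(x a - x b) ^ 2 / σ) - Real.exp (-(y a - y b) ^ 2 / σ)|
          ≤ C * (L * (2 * ‖x - y‖)) := by
            apply mul_le_mul (hgC a b) h4 (abs_nonneg _) hC.le
        _ = 2 * C * L * ‖x - y‖ := by ring
    -- entrywise bound on the Laplacian difference
    set M : Matrix (Fin n) (Fin n) ℝ := lapMat g σ x - lapMat g σ y with hMdef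
    have hM : ∀ a b, |M a b| ≤ K * ‖x - y‖ := by
      intro a b
      have hn1 : (1:ℝ) ≤ n := by exact_mod_cast a.pos
      by_cases hab : a = b
      · subst hab
        have hwx : wMat g σ x a a = 0 := by simp [wMat, hgdiag a]
        have hwy : wMat g σ y a a = 0 := by simp [wMat, hgdiag a]
        have e1 : M a a = ∑ b, (wMat g σ x a b - wMat g σ y a b) := by
          simp [hMdef, lapMat, degFun, hwx, hwy, Finset.sum_sub_distrib]
        rw [e1]
        calc |∑ b, (wMat g σ x a b - wMat g σ y a b)|
            ≤ ∑ b, |wMat g σ x a b - wMat g σ y a b| := Finset.abs_sum_le_sum_abs _ _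
          _ ≤ ∑ _b : Fin n, 2 * C * L * ‖x - y‖ := Finset.sum_le_sum fun b _ => hw a b
          _ = (n:ℝ) * (2 * C * L * ‖x - y‖) := by
              simp [Finset.sum_const, Finset.card_univ]
          _ = K * ‖x - y‖ := by simp only [hKdef]; ring
      · have e1 : M a b = -(wMat g σ x a b - wMat g σ y a b) := by
          simp [hMdef, lapMat, Matrix.diagonal_apply_ne _ hab]
          ring
        rw [e1, abs_neg]
        calc |wMat g σ x a b - wMat g σ y a b| ≤ 2 * C * L * ‖x - y‖ := hw a b
          _ ≤ K * ‖x - y‖ := by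
            simp only [hKdef]
            nlinarith [mul_nonneg (mul_nonneg (mul_nonneg (by norm_num : (0:ℝ) ≤ 2) hC.le)
              hL.le) (norm_nonneg (x - y)), hn1]
    -- the applied difference
    have happ : ∀ a, (lapCLM g σ x z - lapCLM g σ y z : EuclideanSpace ℝ (Fin n)) a
        = ∑ b, M a b * z b := by
      intro a
      simp [lapCLM, hMdef, Matrix.toEuclideanLin_apply, Matrix.mulVec, dotProduct,
        Finset.sum_sub_distrib, Matrix.sub_apply, sub_mul]
    set c : ℝ := (n:ℝ) * (K * ‖x - y‖ * ‖z‖) with hcdef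
    have hc : 0 ≤ c := by
      simp only [hcdef]
      positivity
    have hrow : ∀ a, ‖(lapCLM g σ x z - lapCLM g σ y z : EuclideanSpace ℝ (Fin n)) a‖ ≤ c := by
      intro a
      rw [happ a, Real.norm_eq_abs]
      calc |∑ b, M a b * z b| ≤ ∑ b, |M a b * z b| := Finset.abs_sum_le_sum_abs _ _
        _ ≤ ∑ _b : Fin n, K * ‖x - y‖ * ‖z‖ := by
            apply Finset.sum_le_sum
            intro b _
            rw [abs_mul]
            have hz : |z b| ≤ ‖z‖ := coord_le_norm z b
            apply mul_le_mul (hM a b) hz (abs_nonneg _)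
            positivity
        _ = c := by
            simp only [hcdef, Finset.sum_const, Finset.card_univ, Fintype.card_fin,
              nsmul_eq_mul]
    have hnorm : ‖lapCLM g σ x z - lapCLM g σ y z‖ ≤ (n:ℝ) * c := by
      rw [EuclideanSpace.norm_eq]
      calc Real.sqrt (∑ a, ‖(lapCLM g σ x z - lapCLM g σ y z : EuclideanSpace ℝ (Fin n)) a‖ ^ 2)
          ≤ Real.sqrt (∑ _a : Fin n, c ^ 2) := by
            apply Real.sqrt_le_sqrt
            apply Finset.sum_le_sum
            intro a _
            exact pow_le_pow_left₀ (norm_nonneg _) (hrow a) 2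
        _ = Real.sqrt ((n:ℝ) * c ^ 2) := by
            simp [Finset.sum_const, Finset.card_univ]
        _ = Real.sqrt (n:ℝ) * c := by
            rw [Real.sqrt_mul (by positivity), Real.sqrt_sq hc]
        _ ≤ (n:ℝ) * c := by
            apply mul_le_mul_of_nonneg_right _ hc
            calc Real.sqrt (n:ℝ) ≤ Real.sqrt ((n:ℝ) ^ 2) :=
                  Real.sqrt_le_sqrt (by exact_mod_cast Nat.le_self_pow two_ne_zero n)
              _ = (n:ℝ) := Real.sqrt_sq n.cast_nonneg
    calc ‖lapCLM g σ x z - lapCLM g σ y z‖ ≤ (n:ℝ) * c := hnorm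
      _ = 2 * C * L * (n:ℝ) ^ 3 * ‖x - y‖ * ‖z‖ := by
          simp only [hcdef, hKdef]; ring
      _ ≤ H * ‖x - y‖ * ‖z‖ := by
          simp only [hHdef]
          nlinarith [norm_nonneg (x - y), norm_nonneg z,
            mul_nonneg (norm_nonneg (x - y)) (norm_nonneg z)]
  refine ⟨H, hH, ?_, ?_⟩
  · intro x y
    apply ContinuousLinearMap.opNorm_le_bound _ (by positivity)
    intro z
    have := key x y z
    simpa [ContinuousLinearMap.sub_apply, mul_assoc] using this
  · intro x y z
    have := key x y z
    nlinarith [this, norm_nonneg z, norm_nonneg (x - y)]
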